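/- Let ℓ_n denote the number of DU-equivalence classes of paths of length n in ℰ. Then ℓ_0 = 1, ℓ_1 = 0, ℓ_2 = 1, and ℓ_n = ℓ_{n−1} + ℓ_{n−2} for all n ≥ 3. -/
import Mathlib


/-- Steps of a Dyck path with catastrophes: up-step `U`, down-step `D`,
and catastrophe step `C k` of size `k` (valid paths only use `k ≥ 2`). -/
inductive Step where
  | U : Step
  | D : Step
  | C : ℕ → Step
  deriving DecidableEq

/-- The vertical displacement of a step. -/
def Step.val : Step → ℤ
  | .U => 1
  | .D => -1
  | .C k => -(k : ℤ)

/-- The height (ordinate) of the path after its first `i` steps. -/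
def hgt (P : List Step) (i : ℕ) : ℤ := ((P.take i).map Step.val).sum

/-- `InE P` means `P` is a Dyck path with catastrophes (a member of ℰ):
it stays at height ≥ 0, ends on the x-axis, and every catastrophe step
`C k` has `k ≥ 2` and starts at height `k` (hence ends on the x-axis). -/
def InE (P : List Step) : Prop :=
  (∀ i, 0 ≤ hgt P i) ∧ hgt P P.length = 0 ∧
    ∀ i k, P[i]? = some (Step.C k) → 2 ≤ k ∧ hgt P i = (k : ℤ)

/-- `(UD)^k`. -/
def UDpow (k : ℕ) : List Step := (List.replicate k [Step.U, Step.D]).flatten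

/-- `(DU)^k`. -/
def DUpow (k : ℕ) : List Step := (List.replicate k [Step.D, Step.U]).flatten

/-- `U^k`. -/
def Upow (k : ℕ) : List Step := List.replicate k Step.U

/-- `C_s` with the convention `C_1 = D`. -/
def cfin (s : ℕ) : Step := if s = 1 then Step.D else Step.C s

/-- Test whether a step is a catastrophe step. -/
def isCatB : Step → Bool
  | .C _ => true
  | _ => false

/-- The number of catastrophe steps in a path. -/
def catCount (P : List Step) : ℕ := P.countP isCatB

/-- The number of equivalence classes, for the equivalence `E`, of paths of
length `n` in ℰ. -/
noncomputable def nClasses (E : List Step → List Step → Prop) (n : ℕ) : ℕ :=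
  Nat.card (Quot (fun P Q : {P : List Step // InE P ∧ P.length = n} => E P.1 Q.1))

/-- Two paths are `DU`-equivalent when the occurrences of the pattern `DU`
appear at the same positions in both paths. -/
def DUEquiv (P Q : List Step) : Prop :=
  ∀ i : ℕ, (P[i]? = some Step.D ∧ P[i + 1]? = some Step.U) ↔
    (Q[i]? = some Step.D ∧ Q[i + 1]? = some Step.U)

/-- The number `ℓ n` of DU-equivalence classes of paths of length `n` in ℰ
satisfies `ℓ 0 = 1`, `ℓ 1 = 0`, `ℓ 2 = 1` and `ℓ n = ℓ (n-1) + ℓ (n-2)` for `n ≥ 3`. -/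
lemma hgt_zero (P : List Step) : hgt P 0 = 0 := rfl

lemma hgt_succ (P : List Step) (i : ℕ) (s : Step) (h : P[i]? = some s) :
    hgt P (i + 1) = hgt P i + s.val := by
  unfold hgt
  rw [List.take_succ, h]
  simp

lemma hgt_stable (P : List Step) (i : ℕ) (h : P.length ≤ i) :
    hgt P i = hgt P P.length := by
  unfold hgt
  rw [List.take_of_length_le h, List.take_length]

def duSet (n : ℕ) (P : List Step) : Finset ℕ :=
  (Finset.range n).filter (fun i => P[i]? = some Step.D ∧ P[i+1]? = some Step.U)

def indSets (m : ℕ) : Finset (Finset ℕ) :=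
  (Finset.Icc 1 m).powerset.filter (fun S => ∀ a ∈ S, a + 1 ∉ S)

lemma mem_indSets {m : ℕ} {S : Finset ℕ} :
    S ∈ indSets m ↔ S ⊆ Finset.Icc 1 m ∧ ∀ a ∈ S, a + 1 ∉ S := by
  simp [indSets, Finset.mem_powerset]

lemma mem_of_mem_indSets {m a : ℕ} {S : Finset ℕ} (hS : S ∈ indSets m) (ha : a ∈ S) :
    1 ≤ a ∧ a ≤ m := by
  have := (mem_indSets.mp hS).1 ha
  simpa [Finset.mem_Icc] using this

/-- number of elements of `S` below `i` -/
def dcnt (S : Finset ℕ) (i : ℕ) : ℕ := ((Finset.range i).filter (· ∈ S)).card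

lemma dcnt_succ (S : Finset ℕ) (i : ℕ) :
    dcnt S (i + 1) = dcnt S i + (if i ∈ S then 1 else 0) := by
  unfold dcnt
  rw [Finset.range_add_one, Finset.filter_insert]
  split
  · rw [Finset.card_insert_of_notMem (by simp)]
  · simp

lemma dcnt_le {m : ℕ} {S : Finset ℕ} (hS : S ∈ indSets m) : ∀ i, 2 * dcnt S i ≤ i := by
  intro i
  induction i using Nat.strong_induction_on with
  | _ i ih =>
    match i with
    | 0 => simp [dcnt]
    | 1 =>
      have h0 : 0 ∉ S := fun h => by have := mem_of_mem_indSets hS h; omega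
      rw [show (1:ℕ) = 0 + 1 from rfl, dcnt_succ]
      simp [dcnt, h0]
    | (j + 2) =>
      have h := ih j (by omega)
      rw [dcnt_succ, dcnt_succ]
      have : ¬ (j ∈ S ∧ j + 1 ∈ S) := fun ⟨h1, h2⟩ => (mem_indSets.mp hS).2 j h1 h2
      by_cases hj : j ∈ S <;> by_cases hj1 : j + 1 ∈ S <;> simp [hj, hj1] at this ⊢ <;> omega

/-- the canonical path for a DU-set `S` -/
def canon (n : ℕ) (S : Finset ℕ) : List Step :=
  (List.range (n-1)).map (fun i => if i ∈ S then Step.D else Step.U) ++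
    [cfin (n - 1 - 2 * S.card)]

lemma canon_length {n : ℕ} (hn : 1 ≤ n) (S : Finset ℕ) : (canon n S).length = n := by
  simp [canon]; omega

lemma canon_get_lt {n : ℕ} {S : Finset ℕ} {i : ℕ} (hi : i < n - 1) :
    (canon n S)[i]? = some (if i ∈ S then Step.D else Step.U) := by
  unfold canon
  rw [List.getElem?_append_left (by simpa using hi)]
  simp [hi]

lemma canon_get_last {n : ℕ} (hn : 1 ≤ n) (S : Finset ℕ) :
    (canon n S)[n-1]? = some (cfin (n - 1 - 2 * S.card)) := by
  unfold canon
  rw [List.getElem?_append_right (by simp)]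
  simp

lemma cfin_ne_U (s : ℕ) : cfin s ≠ Step.U := by unfold cfin; split <;> simp

lemma cfin_val {s : ℕ} (hs : 1 ≤ s) : (cfin s).val = -(s : ℤ) := by
  unfold cfin
  split
  · simp [Step.val]; omega
  · rfl

lemma dcnt_eq_card {S : Finset ℕ} {k : ℕ} (h : ∀ a ∈ S, a < k) : dcnt S k = S.card := by
  unfold dcnt
  congr 1
  rw [Finset.filter_mem_eq_inter, Finset.inter_eq_right]
  intro a ha
  exact Finset.mem_range.mpr (h a ha)

lemma canon_hgt {n : ℕ} {S : Finset ℕ} : ∀ i, i ≤ n - 1 →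
    hgt (canon n S) i = (i : ℤ) - 2 * dcnt S i := by
  intro i
  induction i with
  | zero => intro _; simp [hgt_zero, dcnt]
  | succ j ih =>
    intro hj
    have hjlt : j < n - 1 := by omega
    rw [hgt_succ _ _ _ (canon_get_lt hjlt), ih (by omega), dcnt_succ]
    by_cases hjS : j ∈ S <;> simp [hjS, Step.val] <;> push_cast <;> ring

lemma card_bound {n : ℕ} {S : Finset ℕ} (hn : 2 ≤ n) (hS : S ∈ indSets (n - 3)) :
    2 * S.card ≤ n - 2 := by
  have hlt : ∀ a ∈ S, a < n - 2 := fun a ha => by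
    have := mem_of_mem_indSets hS ha; omega
  have := dcnt_le hS (n - 2)
  rwa [dcnt_eq_card hlt] at this

lemma canon_InE {n : ℕ} {S : Finset ℕ} (hn : 2 ≤ n) (hS : S ∈ indSets (n - 3)) :
    InE (canon n S) := by
  have hlt : ∀ a ∈ S, a < n - 1 := fun a ha => by
    have := mem_of_mem_indSets hS ha; omega
  have hcard := card_bound hn hS
  have hs1 : 1 ≤ n - 1 - 2 * S.card := by omega
  have hlast : hgt (canon n S) (n - 1) = ((n - 1 - 2 * S.card : ℕ) : ℤ) := by
    rw [canon_hgt (n-1) le_rfl, dcnt_eq_card hlt]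
    have h2 : 2 * S.card ≤ n - 1 := by omega
    omega
  have hfin : hgt (canon n S) n = 0 := by
    have h := hgt_succ (canon n S) (n-1) _ (canon_get_last (by omega) S)
    rw [show n - 1 + 1 = n from by omega] at h
    rw [h, hlast, cfin_val hs1]
    simp
  have hlen := canon_length (by omega : 1 ≤ n) S
  refine ⟨?_, ?_, ?_⟩
  · intro i
    rcases Nat.lt_or_ge i n with hi | hi
    · rcases Nat.lt_or_ge i n with _ | _
      · by_cases hi1 : i ≤ n - 1
        · rw [canon_hgt i hi1]
          have := dcnt_le hS i
          push_cast
          omega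
        · have : i = n := by omega
          rw [this, hfin]
      · omega
    · rw [hgt_stable _ i (by omega), hlen, hfin]
  · rw [hlen, hfin]
  · intro i k hik
    rcases Nat.lt_or_ge i (n-1) with hi | hi
    · rw [canon_get_lt hi] at hik
      by_cases hiS : i ∈ S <;> simp [hiS] at hik
    · rcases Nat.lt_or_ge i n with hi2 | hi2
      · have hieq : i = n - 1 := by omega
        rw [hieq, canon_get_last (by omega) S] at hik
        have hc : cfin (n - 1 - 2 * S.card) = Step.C k := by injection hik
        unfold cfin at hc
        split at hc
        · exact absurd hc (by simp)
        · have hks : k = n - 1 - 2 * S.card := by injection hc with h; omega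
          subst hks
          rw [hieq, hlast]
          constructor
          · omega
          · rfl
      · rw [List.getElem?_eq_none (by omega)] at hik
        exact absurd hik (by simp)

lemma canon_duSet {n : ℕ} {S : Finset ℕ} (hn : 2 ≤ n) (hS : S ∈ indSets (n - 3)) :
    duSet n (canon n S) = S := by
  ext i
  simp only [duSet, Finset.mem_filter, Finset.mem_range]
  constructor
  · rintro ⟨hi, hD, hU⟩
    -- the U at position i+1 forces i+1 < n-1
    have hUlt : i + 1 < n - 1 := by
      rcases Nat.lt_or_ge (i+1) (n-1) with h | h
      · exact h
      · rcases Nat.lt_or_ge (i+1) n with h2 | h2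
        · have : i + 1 = n - 1 := by omega
          rw [this, canon_get_last (by omega) S] at hU
          exact absurd (by injection hU) (cfin_ne_U _)
        · rw [List.getElem?_eq_none (by rw [canon_length (by omega) S]; omega)] at hU
          exact absurd hU (by simp)
    have hilt : i < n - 1 := by omega
    rw [canon_get_lt hilt] at hD
    by_cases hiS : i ∈ S
    · exact hiS
    · simp [hiS] at hD
  · intro hiS
    have hb := mem_of_mem_indSets hS hiS
    have hilt : i < n - 1 := by omega
    have hi1lt : i + 1 < n - 1 := by omega
    have hnotS : i + 1 ∉ S := (mem_indSets.mp hS).2 i hiS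
    refine ⟨by omega, ?_, ?_⟩
    · rw [canon_get_lt hilt]; simp [hiS]
    · rw [canon_get_lt hi1lt]; simp [hnotS]

lemma duEquiv_iff {n : ℕ} {P Q : List Step} (hP : P.length = n) (hQ : Q.length = n) :
    DUEquiv P Q ↔ duSet n P = duSet n Q := by
  constructor
  · intro h
    ext i
    simp only [duSet, Finset.mem_filter, Finset.mem_range]
    rw [h i]
  · intro h i
    constructor
    · intro hc
      have hi : i < n := by
        have := (List.getElem?_eq_some_iff.mp hc.1).1; omega
      have hm : i ∈ duSet n P := by
        simp only [duSet, Finset.mem_filter, Finset.mem_range]; exact ⟨hi, hc⟩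
      rw [h] at hm
      exact (Finset.mem_filter.mp hm).2
    · intro hc
      have hi : i < n := by
        have := (List.getElem?_eq_some_iff.mp hc.1).1; omega
      have hm : i ∈ duSet n Q := by
        simp only [duSet, Finset.mem_filter, Finset.mem_range]; exact ⟨hi, hc⟩
      rw [← h] at hm
      exact (Finset.mem_filter.mp hm).2

lemma duSet_mem_indSets {n : ℕ} {P : List Step} (h : InE P) (hl : P.length = n) :
    duSet n P ∈ indSets (n - 3) := by
  rw [mem_indSets]
  constructor
  · intro i hi
    simp only [duSet, Finset.mem_filter, Finset.mem_range] at hi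
    obtain ⟨hin, hD, hU⟩ := hi
    have hi1 : i + 1 < n := by
      have := (List.getElem?_eq_some_iff.mp hU).1; omega
    have hpos : 1 ≤ i := by
      by_contra hc
      have hi0 : i = 0 := by omega
      rw [hi0] at hD
      have := hgt_succ P 0 _ hD
      rw [hgt_zero] at this
      have h1 := h.1 1
      rw [this] at h1
      simp [Step.val] at h1
    have hne : i + 1 ≠ n - 1 := by
      intro hc
      have hstep := hgt_succ P (i+1) _ hU
      rw [hc, show n - 1 + 1 = n from by omega] at hstep
      have h0 : hgt P n = 0 := by rw [← hl]; exact h.2.1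
      have hnn := h.1 (n-1)
      rw [h0] at hstep
      simp [Step.val] at hstep
      omega
    simp only [Finset.mem_Icc]
    omega
  · intro i hi hi1
    simp only [duSet, Finset.mem_filter, Finset.mem_range] at hi hi1
    rw [hi1.2.1] at hi
    exact absurd hi.2.2 (by simp)

lemma InE_nil : InE [] := by
  refine ⟨fun i => le_of_eq ?_, by simp [hgt], fun i k hik => by simp at hik⟩
  simp [hgt]

lemma not_InE_len1 {P : List Step} : ¬ (InE P ∧ P.length = 1) := by
  rintro ⟨hE, hl⟩
  obtain ⟨s, rfl⟩ := List.length_eq_one_iff.mp hl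
  have h1 : hgt [s] 1 = s.val := by simp [hgt]
  have h0 : hgt [s] 1 = 0 := hE.2.1
  cases s with
  | U => rw [h1] at h0; simp [Step.val] at h0
  | D => rw [h1] at h0; simp [Step.val] at h0
  | C k =>
    have := hE.2.2 0 k (by rfl)
    rw [hgt_zero] at this
    have hk := this.1
    have := this.2
    omega

lemma nClasses_eq {n : ℕ} (hn : 2 ≤ n) :
    nClasses DUEquiv n = (indSets (n - 3)).card := by
  unfold nClasses
  set r := fun P Q : {P : List Step // InE P ∧ P.length = n} => DUEquiv P.1 Q.1 with hr
  let f : Quot r → {S // S ∈ indSets (n - 3)} :=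
    Quot.lift (fun P => ⟨duSet n P.1, duSet_mem_indSets P.2.1 P.2.2⟩)
      (fun a b hab => Subtype.ext ((duEquiv_iff a.2.2 b.2.2).mp hab))
  have hbij : Function.Bijective f := by
    constructor
    · intro q1 q2
      induction q1 using Quot.ind with
      | _ a =>
      induction q2 using Quot.ind with
      | _ b =>
      intro hab
      have hab' : duSet n a.1 = duSet n b.1 := by
        have h2 := congrArg Subtype.val hab
        simpa only [f, Quot.lift_mk] using h2
      exact Quot.sound ((duEquiv_iff a.2.2 b.2.2).mpr hab')
    · rintro ⟨S, hS⟩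
      refine ⟨Quot.mk r ⟨canon n S, canon_InE hn hS, canon_length (by omega) S⟩, Subtype.ext ?_⟩
      simpa only [f, Quot.lift_mk] using canon_duSet hn hS
  rw [Nat.card_eq_of_bijective f hbij]
  exact Nat.card_eq_finsetCard _

lemma nClasses_zero : nClasses DUEquiv 0 = 1 := by
  unfold nClasses
  rw [Nat.card_eq_one_iff_unique]
  constructor
  · constructor
    intro q1 q2
    induction q1 using Quot.ind with
    | _ a =>
    induction q2 using Quot.ind with
    | _ b =>
    have : a = b := by
      ext1
      rw [List.length_eq_zero_iff.mp a.2.2, List.length_eq_zero_iff.mp b.2.2]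
    rw [this]
  · exact ⟨Quot.mk _ ⟨[], InE_nil, rfl⟩⟩

lemma nClasses_one : nClasses DUEquiv 1 = 0 := by
  unfold nClasses
  haveI : IsEmpty {P : List Step // InE P ∧ P.length = 1} := ⟨fun p => not_InE_len1 p.2⟩
  haveI : IsEmpty (Quot (fun P Q : {P : List Step // InE P ∧ P.length = 1} => DUEquiv P.1 Q.1)) :=
    ⟨fun q => by induction q using Quot.ind with | _ a => exact isEmptyElim a⟩
  exact Nat.card_of_isEmpty

lemma indSets_zero : (indSets 0).card = 1 := by decide
lemma indSets_one : (indSets 1).card = 2 := by decide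


lemma indSets_rec (m : ℕ) :
    (indSets (m + 2)).card = (indSets (m + 1)).card + (indSets m).card := by
  classical
  have hsplit := Finset.card_filter_add_card_filter_not
    (s := indSets (m+2)) (p := fun S => m + 2 ∈ S)
  have h1 : (indSets (m+2)).filter (fun S => ¬ (m + 2 ∈ S)) = indSets (m + 1) := by
    ext S
    simp only [Finset.mem_filter, mem_indSets]
    constructor
    · rintro ⟨⟨hsub, hind⟩, hnot⟩
      refine ⟨fun a ha => ?_, hind⟩
      have := hsub ha
      simp only [Finset.mem_Icc] at this ⊢
      refine ⟨this.1, ?_⟩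
      by_contra hc
      have : a = m + 2 := by omega
      exact hnot (this ▸ ha)
    · rintro ⟨hsub, hind⟩
      have hnot : m + 2 ∉ S := fun h => by
        have := hsub h; simp only [Finset.mem_Icc] at this; omega
      refine ⟨⟨fun a ha => ?_, hind⟩, hnot⟩
      have := hsub ha; simp only [Finset.mem_Icc] at this ⊢; omega
  have h2 : ((indSets (m+2)).filter (fun S => m + 2 ∈ S)).card = (indSets m).card := by
    refine Finset.card_bij' (fun S _ => S.erase (m+2)) (fun S _ => insert (m+2) S) ?hi ?hj ?li ?ri
    case hi =>
      intro S hS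
      simp only [Finset.mem_filter, mem_indSets] at hS
      obtain ⟨⟨hsub, hind⟩, hmem⟩ := hS
      rw [mem_indSets]
      constructor
      · intro a ha
        have ha' := Finset.mem_of_mem_erase ha
        have hne := Finset.ne_of_mem_erase ha
        have := hsub ha'
        simp only [Finset.mem_Icc] at this ⊢
        refine ⟨this.1, ?_⟩
        by_contra hgt
        have ham : a = m + 1 := by omega
        exact hind a ha' (by rw [ham]; exact hmem)
      · exact fun a ha h => hind a (Finset.mem_of_mem_erase ha) (Finset.mem_of_mem_erase h)
    case hj =>
      intro S hS
      rw [mem_indSets] at hS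
      obtain ⟨hsub, hind⟩ := hS
      simp only [Finset.mem_filter, mem_indSets]
      refine ⟨⟨fun a ha => ?_, fun a ha h => ?_⟩, Finset.mem_insert_self _ _⟩
      · rcases Finset.mem_insert.mp ha with rfl | ha
        · simp [Finset.mem_Icc]
        · have := hsub ha; simp only [Finset.mem_Icc] at this ⊢; omega
      · rcases Finset.mem_insert.mp ha with rfl | ha
        · rcases Finset.mem_insert.mp h with h | h
          · omega
          · have := hsub h; simp only [Finset.mem_Icc] at this; omega
        · rcases Finset.mem_insert.mp h with h | h
          · have := hsub ha; simp only [Finset.mem_Icc] at this; omega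
          · exact hind a ha h
    case li =>
      intro S hS
      simp only [Finset.mem_filter] at hS
      exact Finset.insert_erase hS.2
    case ri =>
      intro S hS
      rw [mem_indSets] at hS
      have hmem : m + 2 ∉ S := fun h => by
        have := hS.1 h; simp only [Finset.mem_Icc] at this; omega
      exact Finset.erase_insert hmem
  rw [h2, h1] at hsplit
  omega


/-- main theorem -/
theorem count_DUEquiv_classes :
    nClasses DUEquiv 0 = 1 ∧ nClasses DUEquiv 1 = 0 ∧ nClasses DUEquiv 2 = 1 ∧
    ∀ n, 3 ≤ n → nClasses DUEquiv n = nClasses DUEquiv (n - 1) + nClasses DUEquiv (n - 2) := by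
  have h2 : nClasses DUEquiv 2 = 1 := by
    rw [nClasses_eq (by omega)]; exact indSets_zero
  have h3 : nClasses DUEquiv 3 = 1 := by
    rw [nClasses_eq (by omega)]; exact indSets_zero
  have h4 : nClasses DUEquiv 4 = 2 := by
    rw [nClasses_eq (by omega)]; exact indSets_one
  refine ⟨nClasses_zero, nClasses_one, h2, ?_⟩
  intro n hn
  rcases Nat.lt_or_ge n 5 with h5 | h5
  · interval_cases n
    · rw [h3]; norm_num [nClasses_one, h2]
    · rw [h4]; norm_num [h3, h2]
  · rw [nClasses_eq (by omega : 2 ≤ n), nClasses_eq (by omega : 2 ≤ n - 1),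
      nClasses_eq (by omega : 2 ≤ n - 2)]
    have e0 : n - 3 = n - 5 + 2 := by omega
    have e1 : n - 1 - 3 = n - 5 + 1 := by omega
    have e2 : n - 2 - 3 = n - 5 := by omega
    rw [e0, e1, e2, indSets_rec]
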